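/- arXiv:2401.07981 — 3 statements merged into one kernel-verified Lean document; each statement's English description precedes it below -/
import Mathlib

section
/- For p ∈ (0,1), q = 1 - p, and integers k ≥ 1 and j ≥ 1, the j-th factorial moment of the truncated geometric random variable X on {1,...,k} with P(X = i) = q p^{i-1}/(1-p^k) satisfies μ_{(j)} := ∑_{i=1}^{k} i(i-1)⋯(i-j+1) · q p^{i-1}/(1-p^k) = C_j p^k/(1-p^k), where C_j = (j!/(q^j p^k)) [ p^{j-1}(1-p^k) - p^k ∑_{i=1}^{j-1} C(k,i) p^{j-i-1} q^i ] - (k)_j and (k)_j = k(k-1)⋯(k-j+1). -/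
lemma prodA (i j : ℕ) : (∏ t ∈ Finset.range j, ((i:ℝ) - t)) = (j.factorial : ℝ) * (i.choose j : ℝ) := by
  induction j with
  | zero => simp
  | succ j ih =>
    rw [Finset.prod_range_succ, ih]
    rcases le_or_gt (j+1) i with h | h
    · have hc := Nat.choose_succ_right_eq i j
      have : ((i.choose (j+1) : ℕ) : ℝ) * (j+1) = (i.choose j : ℝ) * ((i:ℝ) - j) := by
        have hj : (j:ℝ) ≤ i := by exact_mod_cast Nat.le_of_succ_le h
        calc ((i.choose (j+1) : ℕ) : ℝ) * (j+1) = ((i.choose (j+1) * (j+1) : ℕ) : ℝ) := by push_cast; ring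
        _ = ((i.choose j * (i - j) : ℕ) : ℝ) := by rw [hc]
        _ = (i.choose j : ℝ) * ((i:ℝ) - j) := by push_cast [Nat.cast_sub (Nat.le_of_succ_le h)]; ring
      push_cast [Nat.factorial_succ]
      nlinarith [this]
    · rcases Nat.lt_succ_iff_lt_or_eq.mp h with h' | h'
      · simp [Nat.choose_eq_zero_of_lt h', Nat.choose_eq_zero_of_lt (Nat.lt_succ_of_lt h')]
      · subst h'
        simp [Nat.choose_eq_zero_of_lt (Nat.lt_succ_self i), Nat.choose_self]

lemma split01 (m : ℕ) (f : ℕ → ℝ) : ∑ i ∈ Finset.range (m+1), f i = f 0 + ∑ i ∈ Finset.Icc 1 m, f i := by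
  rw [Finset.range_eq_Ico, Finset.Ico_add_one_right_eq_Icc, ← Finset.insert_Icc_add_one_left_eq_Icc (Nat.zero_le m),
    Finset.sum_insert (by simp), zero_add]

lemma icctop (k : ℕ) (f : ℕ → ℝ) : ∑ i ∈ Finset.Icc 1 (k+1), f i = ∑ i ∈ Finset.Icc 1 k, f i + f (k+1) := by
  rw [← Finset.insert_Icc_right_eq_Icc_add_one (by omega), Finset.sum_insert (by simp)]
  ring

noncomputable def Tf (p q : ℝ) (k j : ℕ) : ℝ := (∑ i ∈ Finset.range j, (k.choose i : ℝ) * q^i * p^(j-1-i)) + (k.choose j : ℝ) * q^j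

-- Lemma E
lemma lemE (p q : ℝ) (hq : q = 1 - p) (k j : ℕ) :
    Tf p q k (j+1) = p * Tf p q k j + q^(j+1) * ((k+1).choose (j+1) : ℝ) := by
  unfold Tf
  rw [Finset.sum_range_succ]
  have h1 : ∀ i ∈ Finset.range j, (k.choose i : ℝ) * q^i * p^(j+1-1-i)
      = p * ((k.choose i : ℝ) * q^i * p^(j-1-i)) := by
    intro i hi
    rw [Finset.mem_range] at hi
    have : j + 1 - 1 - i = (j - 1 - i) + 1 := by omega
    rw [this, pow_succ]
    ring
  rw [Finset.sum_congr rfl h1, ← Finset.mul_sum]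
  have : j + 1 - 1 - j = 0 := by omega
  rw [this]
  have hP : ((k+1).choose (j+1) : ℝ) = (k.choose j : ℝ) + (k.choose (j+1) : ℝ) := by
    rw [Nat.choose_succ_succ]; push_cast; ring
  rw [hP, hq]
  ring

lemma lemS (p q : ℝ) (hq : q = 1 - p) (j : ℕ) : ∀ k : ℕ,
    p * Tf p q (k+1) (j+1) + q^(j+2) * (((k+1).choose (j+1) : ℕ) : ℝ) = Tf p q k (j+1) := by
  induction j with
  | zero =>
    intro k
    subst hq
    simp [Tf, Finset.sum_range_one]
    push_cast
    ring
  | succ j ih =>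
    intro k
    have e1 := lemE p q hq (k+1) (j+1)
    have e2 := lemE p q hq k (j+1)
    have e3 := ih k
    have hP : (((k+2).choose (j+2) : ℕ) : ℝ) = (((k+1).choose (j+1) : ℕ) : ℝ) + (((k+1).choose (j+2) : ℕ) : ℝ) := by
      rw [show k+2 = (k+1)+1 from rfl, Nat.choose_succ_succ]
      push_cast; ring
    subst hq
    linear_combination p * e1 - e2 + p * e3 + p * (1-p)^(j+2) * hP

lemma lemM (p q : ℝ) (hq : q = 1 - p) (m : ℕ) : ∀ k : ℕ,
    q^(m+2) * (∑ i ∈ Finset.Icc 1 k, ((i.choose (m+1) : ℕ) : ℝ) * p^(i-1)) + p^k * Tf p q k (m+1) = p^m := by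
  intro k
  induction k with
  | zero =>
    have : Finset.Icc 1 0 = (∅ : Finset ℕ) := by simp
    rw [this, Finset.sum_empty]
    have hT : Tf p q 0 (m+1) = p^m := by
      unfold Tf
      rw [Finset.sum_eq_single 0]
      · simp
      · intro i _ hi
        obtain ⟨i', rfl⟩ := Nat.exists_eq_succ_of_ne_zero hi
        simp [Nat.choose_succ_succ]
      · simp
    rw [hT]; ring
  | succ k ih =>
    rw [icctop k (fun i => ((i.choose (m+1) : ℕ) : ℝ) * p^(i-1))]
    have h1 : k + 1 - 1 = k := rfl
    rw [h1]
    linear_combination ih + p^k * lemS p q hq m k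
/-- The `j`-th factorial moment of the truncated geometric distribution on `{1,…,k}`
equals `C_j p^k / (1 - p^k)`, where `C_j` is the closed form of Charalambides. -/
theorem stmt_2 (p : ℝ) (hp0 : 0 < p) (hp1 : p < 1) (q : ℝ) (hq : q = 1 - p)
    (k j : ℕ) (hk : 1 ≤ k) (hj : 1 ≤ j) :
    (∑ i ∈ Finset.Icc 1 k,
        (∏ t ∈ Finset.range j, ((i : ℝ) - t)) * (q * p ^ (i - 1) / (1 - p ^ k)))
      =
      ((j.factorial : ℝ) / (q ^ j * p ^ k) *
          (p ^ (j - 1) * (1 - p ^ k) -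
            p ^ k * ∑ i ∈ Finset.Icc 1 (j - 1), (k.choose i : ℝ) * p ^ (j - i - 1) * q ^ i)
        - ∏ t ∈ Finset.range j, ((k : ℝ) - t)) * p ^ k / (1 - p ^ k) := by
  obtain ⟨m, rfl⟩ : ∃ m, j = m + 1 := ⟨j - 1, by omega⟩
  have hq0 : q ≠ 0 := by rw [hq]; nlinarith
  have hp : p ≠ 0 := ne_of_gt hp0
  have hpk1 : p ^ k < 1 := pow_lt_one₀ (le_of_lt hp0) hp1 (by omega)
  have hpk : (1 : ℝ) - p ^ k ≠ 0 := by nlinarith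
  have hpkne : p ^ k ≠ 0 := pow_ne_zero _ hp
  have key := lemM p q hq m k
  set S : ℝ := ∑ i ∈ Finset.Icc 1 k, ((i.choose (m+1) : ℕ) : ℝ) * p^(i-1) with hSdef
  set T : ℝ := Tf p q k (m+1) with hTdef
  have hS : (∑ i ∈ Finset.Icc 1 k,
      (∏ t ∈ Finset.range (m+1), ((i : ℝ) - t)) * (q * p ^ (i - 1) / (1 - p ^ k)))
      = ((m+1).factorial : ℝ) * q / (1 - p^k) * S := by
    rw [hSdef, Finset.mul_sum]
    refine Finset.sum_congr rfl ?_
    intro i _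
    rw [prodA]
    ring
  have hW : (∑ i ∈ Finset.Icc 1 (m + 1 - 1), (k.choose i : ℝ) * p ^ (m + 1 - i - 1) * q ^ i)
      = T - p^m - ((k.choose (m+1) : ℕ) : ℝ) * q^(m+1) := by
    have h0 : T = (((k.choose 0 : ℕ) : ℝ) * q^0 * p^(m+1-1-0)
        + ∑ i ∈ Finset.Icc 1 m, ((k.choose i : ℕ) : ℝ) * q^i * p^(m+1-1-i))
        + ((k.choose (m+1) : ℕ) : ℝ) * q^(m+1) := by
      rw [hTdef]
      unfold Tf
      rw [split01 m (fun i => ((k.choose i : ℕ) : ℝ) * q^i * p^(m+1-1-i))]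
    have h1 : (m + 1 - 1) = m := rfl
    rw [h1]
    have h2 : ∀ i ∈ Finset.Icc 1 m, (k.choose i : ℝ) * p ^ (m + 1 - i - 1) * q ^ i
        = ((k.choose i : ℕ) : ℝ) * q^i * p^(m+1-1-i) := by
      intro i hi
      have : m + 1 - i - 1 = m + 1 - 1 - i := by omega
      rw [this]; ring
    rw [Finset.sum_congr rfl h2, h0]
    simp only [Nat.choose_zero_right, Nat.cast_one, Nat.sub_zero, Nat.add_sub_cancel]
    ring
  rw [hS, hW]
  have h3 : ∏ t ∈ Finset.range (m+1), ((k : ℝ) - t)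
      = ((m+1).factorial : ℝ) * ((k.choose (m+1) : ℕ) : ℝ) := prodA k (m+1)
  rw [h3]
  have h4 : m + 1 - 1 = m := rfl
  rw [h4]
  field_simp
  linear_combination key
end

section
/- For a complex number λ with |λ| < 1 and positive integers i, m, the identity ∑_{n=i}^{∞} C(n,i) C(n-1,m-1) λ^n = (λ^i/(1-λ)^{i+m}) ∑_{b=1}^{m} C(m,b) C(i-1,b-1) λ^{m-b} holds. -/
open Finset

noncomputable section Stmt5Aux

/-- closed-form polynomial factor -/
def Pfun (lam : ℂ) (i m : ℕ) : ℂ :=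
  ∑ a ∈ Finset.range m, (m.choose (a+1) : ℂ) * ((i-1).choose a : ℂ) * lam ^ (m-1-a)

/-- the power series -/
def Ffun (lam : ℂ) (i m : ℕ) : ℂ :=
  ∑' n : ℕ, (n.choose i : ℂ) * ((n-1).choose (m-1) : ℂ) * lam ^ n

lemma summableF {lam : ℂ} (hlam : ‖lam‖ < 1) (i m : ℕ) :
    Summable (fun n : ℕ => (n.choose i : ℂ) * ((n-1).choose (m-1) : ℂ) * lam ^ n) := by
  have h : Summable (fun n : ℕ => (n : ℝ) ^ (i + (m-1)) * ‖lam‖ ^ n) :=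
    summable_pow_mul_geometric_of_norm_lt_one _
      (by rwa [Real.norm_eq_abs, abs_of_nonneg (norm_nonneg _)])
  refine Summable.of_norm_bounded h ?_
  intro n
  have hb : (n.choose i) * ((n-1).choose (m-1)) ≤ n ^ (i + (m-1)) := by
    rw [pow_add]
    exact Nat.mul_le_mul (Nat.choose_le_pow _ _)
      (le_trans (Nat.choose_le_pow _ _) (Nat.pow_le_pow_left (Nat.sub_le n 1) _))
  have : ‖(n.choose i : ℂ) * ((n-1).choose (m-1) : ℂ) * lam ^ n‖
      = ((n.choose i * (n-1).choose (m-1) : ℕ) : ℝ) * ‖lam‖ ^ n := by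
    rw [norm_mul, norm_mul, norm_pow]
    push_cast
    simp [Complex.norm_natCast]
  rw [this]
  have h2 : ((n.choose i * (n-1).choose (m-1) : ℕ) : ℝ) ≤ (n : ℝ) ^ (i + (m-1)) := by
    exact_mod_cast hb
  exact mul_le_mul_of_nonneg_right h2 (pow_nonneg (norm_nonneg _) _)

lemma hasSum_geo {lam : ℂ} (hlam : ‖lam‖ < 1) (k : ℕ) :
    HasSum (fun n : ℕ => (n.choose k : ℂ) * lam ^ n) (lam ^ k / (1 - lam) ^ (k+1)) := by
  have h3 : ∑ n ∈ Finset.range k, (n.choose k : ℂ) * lam ^ n = 0 := by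
    apply Finset.sum_eq_zero
    intro n hn
    rw [Nat.choose_eq_zero_of_lt (Finset.mem_range.mp hn)]
    simp
  refine (hasSum_nat_add_iff' k).mp ?_
  rw [h3, sub_zero]
  have h := (hasSum_choose_mul_geometric_of_norm_lt_one k hlam).mul_left (lam ^ k)
  rw [mul_one_div] at h
  convert h using 1
  · rfl
  funext n
  show ((n+k).choose k : ℂ) * lam ^ (n+k) = lam ^ k * (((n+k).choose k : ℂ) * lam ^ n)
  rw [pow_add]
  ring

lemma summable_geo {lam : ℂ} (hlam : ‖lam‖ < 1) (k : ℕ) :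
    Summable (fun n : ℕ => (n.choose k : ℂ) * lam ^ n) := (hasSum_geo hlam k).summable

/-- the Pascal recurrence for the polynomial factor -/
lemma P_rec (lam : ℂ) (p q : ℕ) :
    Pfun lam (p+2) (q+2) = (1-lam) * Pfun lam (p+1) (q+1) + Pfun lam (p+1) (q+2)
      + lam * Pfun lam (p+2) (q+1) := by
  have e1 : Pfun lam (p+2) (q+2)
      = ∑ a ∈ range (q+2), ((q+2).choose (a+1) : ℂ) * ((p+1).choose a : ℂ) * lam ^ (q+1-a) := by
    simp [Pfun]
  have e2 : Pfun lam (p+1) (q+1)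
      = ∑ a ∈ range (q+1), ((q+1).choose (a+1) : ℂ) * ((p).choose a : ℂ) * lam ^ (q-a) := by
    simp [Pfun]
  have e3 : Pfun lam (p+1) (q+2)
      = ∑ a ∈ range (q+2), ((q+2).choose (a+1) : ℂ) * ((p).choose a : ℂ) * lam ^ (q+1-a) := by
    simp [Pfun]
  have e4 : Pfun lam (p+2) (q+1)
      = ∑ a ∈ range (q+1), ((q+1).choose (a+1) : ℂ) * ((p+1).choose a : ℂ) * lam ^ (q-a) := by
    simp [Pfun]
  -- T : the extra sum
  set T : ℂ := ∑ a ∈ range (q+1), ((q+2).choose (a+2) : ℂ) * ((p).choose a : ℂ) * lam ^ (q-a) with hT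
  set T' : ℂ := ∑ a ∈ range q, ((q+1).choose (a+2) : ℂ) * ((p).choose a : ℂ) * lam ^ (q-1-a) with hT'
  -- S1 = T + S3
  have hS1 : Pfun lam (p+2) (q+2) = T + Pfun lam (p+1) (q+2) := by
    rw [e1, e3, Finset.sum_range_succ' _ (q+1), Finset.sum_range_succ' _ (q+1)]
    have : ∀ a ∈ range (q+1),
        ((q+2).choose (a+1+1) : ℂ) * ((p+1).choose (a+1) : ℂ) * lam ^ (q+1-(a+1))
        = ((q+2).choose (a+2) : ℂ) * ((p).choose a : ℂ) * lam ^ (q-a)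
          + ((q+2).choose (a+1+1) : ℂ) * ((p).choose (a+1) : ℂ) * lam ^ (q+1-(a+1)) := by
      intro a ha
      have : (p+1).choose (a+1) = p.choose a + p.choose (a+1) := Nat.choose_succ_succ p a
      rw [this]
      have : q+1-(a+1) = q-a := by omega
      rw [this]
      push_cast
      ring
    rw [Finset.sum_congr rfl this, Finset.sum_add_distrib]
    simp
    ring
  -- S4 = T' + S2
  have hS4 : Pfun lam (p+2) (q+1) = T' + Pfun lam (p+1) (q+1) := by
    rw [e4, e2, Finset.sum_range_succ' _ q, Finset.sum_range_succ' _ q]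
    have : ∀ a ∈ range q,
        ((q+1).choose (a+1+1) : ℂ) * ((p+1).choose (a+1) : ℂ) * lam ^ (q-(a+1))
        = ((q+1).choose (a+2) : ℂ) * ((p).choose a : ℂ) * lam ^ (q-1-a)
          + ((q+1).choose (a+1+1) : ℂ) * ((p).choose (a+1) : ℂ) * lam ^ (q-(a+1)) := by
      intro a ha
      have h1 : (p+1).choose (a+1) = p.choose a + p.choose (a+1) := Nat.choose_succ_succ p a
      have h2 : q-(a+1) = q-1-a := by omega
      rw [h1, h2]
      push_cast
      ring
    rw [Finset.sum_congr rfl this, Finset.sum_add_distrib]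
    simp
    ring
  -- T = S2 + lam * T'
  have hT2 : T = Pfun lam (p+1) (q+1) + lam * T' := by
    rw [hT, e2]
    have : ∀ a ∈ range (q+1),
        ((q+2).choose (a+2) : ℂ) * ((p).choose a : ℂ) * lam ^ (q-a)
        = ((q+1).choose (a+1) : ℂ) * ((p).choose a : ℂ) * lam ^ (q-a)
          + ((q+1).choose (a+2) : ℂ) * ((p).choose a : ℂ) * lam ^ (q-a) := by
      intro a ha
      have : (q+2).choose (a+2) = (q+1).choose (a+1) + (q+1).choose (a+2) :=
        Nat.choose_succ_succ (q+1) (a+1)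
      rw [this]
      push_cast
      ring
    rw [Finset.sum_congr rfl this, Finset.sum_add_distrib]
    congr 1
    -- ∑_{a<q+1} C(q+1,a+2) C(p,a) λ^{q-a} = lam * T'
    rw [hT', Finset.sum_range_succ]
    have hz : (q+1).choose (q+2) = 0 := Nat.choose_eq_zero_of_lt (by omega)
    rw [hz]
    simp only [Nat.cast_zero, zero_mul, add_zero]
    rw [Finset.mul_sum]
    apply Finset.sum_congr rfl
    intro a ha
    have : q - a = (q-1-a) + 1 := by
      have := Finset.mem_range.mp ha; omega
    rw [this, pow_succ]
    ring
  rw [hS1, hS4, hT2]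
  ring

/-- termwise Pascal identity for the series coefficients -/
lemma coeff_rec (p q : ℕ) : ∀ n : ℕ,
    (n+1).choose (p+2) * n.choose (q+1)
      = n.choose (p+1) * (n-1).choose q + n.choose (p+1) * (n-1).choose (q+1)
        + n.choose (p+2) * (n-1).choose q + n.choose (p+2) * (n-1).choose (q+1) := by
  intro n
  match n with
  | 0 => simp
  | Nat.succ n =>
    have h1 : (n+2).choose (p+2) = (n+1).choose (p+1) + (n+1).choose (p+2) :=
      Nat.choose_succ_succ _ _
    have h2 : (n+1).choose (q+1) = n.choose q + n.choose (q+1) :=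
      Nat.choose_succ_succ _ _
    simp only [Nat.succ_eq_add_one, Nat.add_sub_cancel]
    rw [h1, h2]
    ring

lemma F_rec {lam : ℂ} (hlam : ‖lam‖ < 1) (p q : ℕ) :
    Ffun lam (p+2) (q+2) = lam * Ffun lam (p+1) (q+1) + lam * Ffun lam (p+1) (q+2)
      + lam * Ffun lam (p+2) (q+1) + lam * Ffun lam (p+2) (q+2) := by
  have hsum := summableF hlam (p+2) (q+2)
  have hqq : (q+1) - 1 = q := by omega
  have hq2 : (q+2) - 1 = q+1 := by omega
  have h0 : Ffun lam (p+2) (q+2)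
      = ∑' n : ℕ, ((n+1).choose (p+2) : ℂ) * (n.choose (q+1) : ℂ) * lam ^ (n+1) := by
    rw [Ffun, Summable.tsum_eq_zero_add hsum]
    simp [Nat.choose_eq_zero_of_lt, hq2]
  have hterm : ∀ n : ℕ,
      ((n+1).choose (p+2) : ℂ) * (n.choose (q+1) : ℂ) * lam ^ (n+1)
      = lam * ((n.choose (p+1) : ℂ) * ((n-1).choose q : ℂ) * lam ^ n)
        + lam * ((n.choose (p+1) : ℂ) * ((n-1).choose (q+1) : ℂ) * lam ^ n)
        + lam * ((n.choose (p+2) : ℂ) * ((n-1).choose q : ℂ) * lam ^ n)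
        + lam * ((n.choose (p+2) : ℂ) * ((n-1).choose (q+1) : ℂ) * lam ^ n) := by
    intro n
    have h := coeff_rec p q n
    have hc : (((n+1).choose (p+2) : ℂ) * (n.choose (q+1) : ℂ))
        = ((n.choose (p+1) : ℂ) * ((n-1).choose q : ℂ)
          + (n.choose (p+1) : ℂ) * ((n-1).choose (q+1) : ℂ)
          + (n.choose (p+2) : ℂ) * ((n-1).choose q : ℂ)
          + (n.choose (p+2) : ℂ) * ((n-1).choose (q+1) : ℂ)) := by
      exact_mod_cast congrArg (Nat.cast : ℕ → ℂ) h
    calc ((n+1).choose (p+2) : ℂ) * (n.choose (q+1) : ℂ) * lam ^ (n+1)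
        = (((n+1).choose (p+2) : ℂ) * (n.choose (q+1) : ℂ)) * lam ^ (n+1) := by ring
      _ = ((n.choose (p+1) : ℂ) * ((n-1).choose q : ℂ)
          + (n.choose (p+1) : ℂ) * ((n-1).choose (q+1) : ℂ)
          + (n.choose (p+2) : ℂ) * ((n-1).choose q : ℂ)
          + (n.choose (p+2) : ℂ) * ((n-1).choose (q+1) : ℂ)) * lam ^ (n+1) := by rw [hc]
      _ = _ := by rw [pow_succ]; ring
  have s1 : Summable (fun n : ℕ => lam * ((n.choose (p+1) : ℂ) * ((n-1).choose q : ℂ) * lam ^ n)) := by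
    simpa [hqq] using (summableF hlam (p+1) (q+1)).mul_left lam
  have s2 : Summable (fun n : ℕ => lam * ((n.choose (p+1) : ℂ) * ((n-1).choose (q+1) : ℂ) * lam ^ n)) := by
    simpa [hq2] using (summableF hlam (p+1) (q+2)).mul_left lam
  have s3 : Summable (fun n : ℕ => lam * ((n.choose (p+2) : ℂ) * ((n-1).choose q : ℂ) * lam ^ n)) := by
    simpa [hqq] using (summableF hlam (p+2) (q+1)).mul_left lam
  have s4 : Summable (fun n : ℕ => lam * ((n.choose (p+2) : ℂ) * ((n-1).choose (q+1) : ℂ) * lam ^ n)) := by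
    simpa [hq2] using (summableF hlam (p+2) (q+2)).mul_left lam
  have eA : (∑' n : ℕ, (n.choose (p+1) : ℂ) * ((n-1).choose q : ℂ) * lam ^ n)
      = Ffun lam (p+1) (q+1) := by simp [Ffun]
  have eB : (∑' n : ℕ, (n.choose (p+1) : ℂ) * ((n-1).choose (q+1) : ℂ) * lam ^ n)
      = Ffun lam (p+1) (q+2) := by simp [Ffun]
  have eC : (∑' n : ℕ, (n.choose (p+2) : ℂ) * ((n-1).choose q : ℂ) * lam ^ n)
      = Ffun lam (p+2) (q+1) := by simp [Ffun]
  have eD : (∑' n : ℕ, (n.choose (p+2) : ℂ) * ((n-1).choose (q+1) : ℂ) * lam ^ n)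
      = Ffun lam (p+2) (q+2) := by simp [Ffun]
  conv_lhs => rw [h0, tsum_congr hterm,
      Summable.tsum_add ((s1.add s2).add s3) s4, Summable.tsum_add (s1.add s2) s3, Summable.tsum_add s1 s2,
      tsum_mul_left, tsum_mul_left, tsum_mul_left, tsum_mul_left, eA, eB, eC, eD]

lemma main_lemma {lam : ℂ} (hlam : ‖lam‖ < 1) :
    ∀ N i m : ℕ, i + m ≤ N → 1 ≤ i → 1 ≤ m →
      Ffun lam i m = lam ^ i / (1 - lam) ^ (i + m) * Pfun lam i m := by
  have hne : (1 : ℂ) - lam ≠ 0 := by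
    intro h
    have : lam = 1 := by linear_combination -h
    rw [this] at hlam; simp at hlam
  intro N
  induction N with
  | zero => intro i m h hi hm; omega
  | succ N ih =>
    intro i m h hi hm
    match m, hm with
    | 1, _ =>
      -- base case m = 1
      have hF : Ffun lam i 1 = lam ^ i / (1 - lam) ^ (i+1) := by
        rw [Ffun]
        have : ∀ n : ℕ, (n.choose i : ℂ) * ((n-1).choose (1-1) : ℂ) * lam ^ n
            = (n.choose i : ℂ) * lam ^ n := by intro n; norm_num
        rw [tsum_congr this, (hasSum_geo hlam i).tsum_eq]
      rw [hF, Pfun]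
      norm_num
    | (q+2), _ =>
      match i, hi with
      | 1, _ =>
        -- base case i = 1
        have hterm : ∀ n : ℕ, (n.choose 1 : ℂ) * ((n-1).choose (q+1) : ℂ) * lam ^ n
            = ((q+2) : ℂ) * ((n.choose (q+2) : ℂ) * lam ^ n) := by
          intro n
          have hn : n.choose 1 * (n-1).choose (q+1) = (q+2) * n.choose (q+2) := by
            match n with
            | 0 => simp [Nat.choose_eq_zero_of_lt]
            | Nat.succ n =>
              simp only [Nat.succ_eq_add_one, Nat.add_sub_cancel, Nat.choose_one_right]
              have h5 := Nat.add_one_mul_choose_eq n (q+1)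
              calc (n+1) * n.choose (q+1) = (n+1).choose (q+2) * (q+2) := by
                    simpa [Nat.succ_eq_add_one] using h5
                _ = (q+2) * (n+1).choose (q+2) := by ring
          calc (n.choose 1 : ℂ) * ((n-1).choose (q+1) : ℂ) * lam ^ n
              = ((n.choose 1 * (n-1).choose (q+1) : ℕ) : ℂ) * lam ^ n := by push_cast; ring
            _ = (((q+2) * n.choose (q+2) : ℕ) : ℂ) * lam ^ n := by rw [hn]
            _ = _ := by push_cast; ring
        have hF : Ffun lam 1 (q+2) = ((q+2) : ℂ) * (lam ^ (q+2) / (1-lam) ^ (q+3)) := by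
          rw [Ffun, show q+2-1 = q+1 from by omega, tsum_congr hterm, tsum_mul_left,
            (hasSum_geo hlam (q+2)).tsum_eq]
        have hP : Pfun lam 1 (q+2) = ((q+2) : ℂ) * lam ^ (q+1) := by
          rw [Pfun]
          rw [Finset.sum_eq_single 0]
          · simp
          · intro a ha hne0
            match a, hne0 with
            | (b+1), _ => simp
          · simp
        rw [hF, hP, show 1+(q+2) = q+3 from by omega]
        have hpow : ((1:ℂ) - lam) ^ (q+3) ≠ 0 := pow_ne_zero _ hne
        field_simp
        ring
      | (p+2), _ =>
        -- inductive step
        have hA := ih (p+1) (q+1) (by omega) (by omega) (by omega)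
        have hB := ih (p+1) (q+2) (by omega) (by omega) (by omega)
        have hC := ih (p+2) (q+1) (by omega) (by omega) (by omega)
        rw [div_mul_eq_mul_div, eq_div_iff (pow_ne_zero _ hne)] at hA hB hC
        have hrec := F_rec hlam p q
        have key : Ffun lam (p+2) (q+2) * (1 - lam)
            = lam * (Ffun lam (p+1) (q+1) + Ffun lam (p+1) (q+2) + Ffun lam (p+2) (q+1)) := by
          linear_combination hrec
        rw [P_rec lam p q, div_mul_eq_mul_div, eq_div_iff (pow_ne_zero _ hne)]
        linear_combination (1-lam)^(p+q+3) * key + lam*(1-lam)*hA + lam*hB + lam*hC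

end Stmt5Aux

/-- Power-series summation identity:
`∑_{n≥i} C(n,i) C(n-1,m-1) λ^n = (λ^i/(1-λ)^{i+m}) ∑_{b=1}^{m} C(m,b) C(i-1,b-1) λ^{m-b}`
for `|λ| < 1` and positive integers `i, m`. -/
theorem stmt_5 (lam : ℂ) (hlam : ‖lam‖ < 1) (i m : ℕ) (hi : 1 ≤ i) (hm : 1 ≤ m) :
    (∑' n : ℕ, (n.choose i : ℂ) * ((n - 1).choose (m - 1) : ℂ) * lam ^ n) =
      lam ^ i / (1 - lam) ^ (i + m) *
        ∑ b ∈ Finset.Icc 1 m, (m.choose b : ℂ) * ((i - 1).choose (b - 1) : ℂ) * lam ^ (m - b) := by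
  have hlam' : ‖lam‖ < 1 := hlam
  have h := main_lemma hlam' (i+m) i m le_rfl hi hm
  have hP : (∑ b ∈ Finset.Icc 1 m, (m.choose b : ℂ) * ((i - 1).choose (b - 1) : ℂ) * lam ^ (m - b))
      = Pfun lam i m := by
    rw [Pfun, ← Finset.Ico_add_one_right_eq_Icc, Finset.sum_Ico_eq_sum_range]
    apply Finset.sum_congr (by congr 1)
    intro a ha
    have h1 : 1 + a - 1 = a := by omega
    have h2 : m - (1+a) = m - 1 - a := by omega
    rw [h1, h2, Nat.add_comm 1 a]
  rw [hP]
  exact h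
end

section
/- Let f_k(n) be defined by the recurrence f_k(n) = ∑_{j=1}^{k} p^{j-1} q f_k(n-j) for n > k, with initial conditions f_k(n) = 0 for 1 ≤ n ≤ k-1 and f_k(k) = p^k, where p ∈ (0,1) and q = 1-p. Then ∑_{n=1}^{∞} f_k(n) = 1. -/
/-- The pmf of the geometric distribution of order `k` (defined by its recurrence and
initial conditions) sums to 1. -/
theorem stmt_6 (p q : ℝ) (hp0 : 0 < p) (hp1 : p < 1) (hq : q = 1 - p)
    (k : ℕ) (hk : 1 ≤ k) (f : ℕ → ℝ)
    (h0 : ∀ n, 1 ≤ n → n ≤ k - 1 → f n = 0)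
    (hkk : f k = p ^ k)
    (hrec : ∀ n, k < n → f n = ∑ j ∈ Finset.Icc 1 k, p ^ (j - 1) * q * f (n - j)) :
    (∑' n : ℕ, f (n + 1)) = 1 := by
  obtain ⟨K, rfl⟩ : ∃ K, k = K + 1 := ⟨k - 1, (Nat.succ_pred_eq_of_pos hk).symm⟩
  have hq0 : 0 < q := by rw [hq]; linarith
  have hpk : (0:ℝ) < p ^ (K+1) := pow_pos hp0 _
  have h0' : ∀ n, 1 ≤ n → n ≤ K → f n = 0 := fun n h1 h2 => h0 n h1 (by omega)
  -- nonnegativity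
  have hfnn : ∀ n, 1 ≤ n → 0 ≤ f n := by
    intro n
    induction n using Nat.strong_induction_on with
    | _ n ih =>
      intro hn
      rcases lt_trichotomy n (K+1) with h | h | h
      · rw [h0' n hn (by omega)]
      · rw [h, hkk]; positivity
      · rw [hrec n h]
        apply Finset.sum_nonneg
        intro j hj
        simp only [Finset.mem_Icc] at hj
        have hnn := ih (n - j) (by omega) (by omega)
        have : 0 ≤ p ^ (j-1) * q := by positivity
        exact mul_nonneg this hnn
  -- recurrence in range form
  have hrec' : ∀ n, K + 1 ≤ n →
      f (n+1) = ∑ i ∈ Finset.range (K+1), p ^ i * q * f (n - i) := by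
    intro n hn
    rw [hrec (n+1) (by omega),
      show Finset.Icc 1 (K+1) = Finset.Ico 1 (K+2) by rw [← Finset.Ico_add_one_right_eq_Icc]; rfl,
      Finset.sum_Ico_eq_sum_range]
    apply Finset.sum_congr (by norm_num)
    intro i hi
    congr 2
    · congr 1; omega
    · omega
  -- b i ≥ 0 for i ≤ K
  have hb : ∀ i, i ≤ K + 1 → 0 ≤ p ^ i - p ^ (K+1) := by
    intro i hi
    have := pow_le_pow_of_le_one hp0.le hp1.le hi
    linarith
  -- key telescoping identity
  have key : ∀ N, K + 1 ≤ N →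
      p ^ (K+1) * (∑ i ∈ Finset.range N, f (i+1))
        + (∑ i ∈ Finset.range (K+1), (p ^ i - p ^ (K+1)) * f (N - i)) = p ^ (K+1) := by
    intro N hN
    induction N, hN using Nat.le_induction with
    | base =>
      have hS : (∑ i ∈ Finset.range (K+1), f (i+1)) = p ^ (K+1) := by
        rw [Finset.sum_range_succ]
        have : ∑ i ∈ Finset.range K, f (i+1) = 0 := by
          apply Finset.sum_eq_zero
          intro i hi
          simp only [Finset.mem_range] at hi
          exact h0' (i+1) (by omega) (by omega)
        rw [this, hkk]; ring
      have hu : (∑ i ∈ Finset.range (K+1), (p ^ i - p ^ (K+1)) * f (K + 1 - i))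
          = (1 - p ^ (K+1)) * p ^ (K+1) := by
        rw [Finset.sum_range_succ']
        have : ∑ i ∈ Finset.range K, (p ^ (i+1) - p ^ (K+1)) * f (K + 1 - (i+1)) = 0 := by
          apply Finset.sum_eq_zero
          intro i hi
          simp only [Finset.mem_range] at hi
          rw [h0' (K + 1 - (i+1)) (by omega) (by omega), mul_zero]
        rw [this, pow_zero]
        simp [hkk]
      rw [hS, hu]; ring
    | succ N hN ih =>
      -- the shift identity
      have shift : p ^ (K+1) * f (N+1)
          + (∑ i ∈ Finset.range (K+1), (p ^ i - p ^ (K+1)) * f (N + 1 - i))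
          = ∑ i ∈ Finset.range (K+1), (p ^ i - p ^ (K+1)) * f (N - i) := by
        have h1 : (∑ i ∈ Finset.range (K+1), (p ^ i - p ^ (K+1)) * f (N + 1 - i))
            = (∑ i ∈ Finset.range K, (p ^ (i+1) - p ^ (K+1)) * f (N - i))
              + (1 - p ^ (K+1)) * f (N+1) := by
          rw [Finset.sum_range_succ']
          congr 1
          apply Finset.sum_congr rfl
          intro i _
          have h : N + 1 - (i + 1) = N - i := by omega
          rw [h]
        have h2 : (∑ i ∈ Finset.range (K+1), (p ^ i - p ^ (K+1)) * f (N - i))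
            = (∑ i ∈ Finset.range K, (p ^ i - p ^ (K+1)) * f (N - i))
              + (p ^ K - p ^ (K+1)) * f (N - K) := by
          rw [Finset.sum_range_succ]
        have h3 : (∑ i ∈ Finset.range K, (p ^ i - p ^ (K+1)) * f (N - i))
            - (∑ i ∈ Finset.range K, (p ^ (i+1) - p ^ (K+1)) * f (N - i))
            = ∑ i ∈ Finset.range K, p ^ i * q * f (N - i) := by
          rw [← Finset.sum_sub_distrib]
          apply Finset.sum_congr rfl
          intro i _
          rw [hq]; ring
        have h4 := hrec' N hN
        rw [Finset.sum_range_succ] at h4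
        rw [h1, h2]
        linear_combination h4 - h3 + f (N - K) * p ^ K * hq
      rw [Finset.sum_range_succ]
      calc p ^ (K+1) * ((∑ i ∈ Finset.range N, f (i+1)) + f (N+1))
            + (∑ i ∈ Finset.range (K+1), (p ^ i - p ^ (K+1)) * f (N + 1 - i))
          = p ^ (K+1) * (∑ i ∈ Finset.range N, f (i+1))
            + (p ^ (K+1) * f (N+1)
              + ∑ i ∈ Finset.range (K+1), (p ^ i - p ^ (K+1)) * f (N + 1 - i)) := by ring
        _ = p ^ (K+1) * (∑ i ∈ Finset.range N, f (i+1))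
            + ∑ i ∈ Finset.range (K+1), (p ^ i - p ^ (K+1)) * f (N - i) := by rw [shift]
        _ = p ^ (K+1) := ih
  -- nonnegativity of u
  have hu_nn : ∀ N, K + 1 ≤ N →
      0 ≤ ∑ i ∈ Finset.range (K+1), (p ^ i - p ^ (K+1)) * f (N - i) := by
    intro N hN
    apply Finset.sum_nonneg
    intro i hi
    simp only [Finset.mem_range] at hi
    exact mul_nonneg (hb i (by omega)) (hfnn (N - i) (by omega))
  -- partial sums bounded by 1
  have hSle : ∀ N, (∑ i ∈ Finset.range N, f (i+1)) ≤ 1 := by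
    intro N
    have hmono : (∑ i ∈ Finset.range N, f (i+1)) ≤
        ∑ i ∈ Finset.range (N + (K+1)), f (i+1) := by
      apply Finset.sum_le_sum_of_subset_of_nonneg
      · exact Finset.range_subset_range.2 (by omega)
      · intro i _ _; exact hfnn (i+1) (by omega)
    have hN' : K + 1 ≤ N + (K+1) := by omega
    have := key _ hN'
    have hu := hu_nn _ hN'
    nlinarith [hmono]
  -- summability
  have hsummable : Summable (fun n : ℕ => f (n+1)) :=
    summable_of_sum_range_le (fun n => hfnn (n+1) (by omega)) hSle
  -- f (n+1) → 0
  have hg0 : Filter.Tendsto (fun n : ℕ => f (n+1)) Filter.atTop (nhds 0) :=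
    hsummable.tendsto_atTop_zero
  -- u N → 0
  have hu0 : Filter.Tendsto
      (fun N => ∑ i ∈ Finset.range (K+1), (p ^ i - p ^ (K+1)) * f (N - i))
      Filter.atTop (nhds 0) := by
    have : Filter.Tendsto
        (fun N => ∑ i ∈ Finset.range (K+1), (p ^ i - p ^ (K+1)) * f (N - i))
        Filter.atTop (nhds (∑ i ∈ Finset.range (K+1), (0:ℝ))) := by
      apply tendsto_finset_sum
      intro i _
      have hcomp : Filter.Tendsto (fun N : ℕ => f ((N - (i+1)) + 1))
          Filter.atTop (nhds 0) :=
        hg0.comp (Filter.tendsto_sub_atTop_nat (i+1))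
      have heq : ∀ᶠ N in Filter.atTop, f ((N - (i+1)) + 1) = f (N - i) := by
        filter_upwards [Filter.eventually_ge_atTop (i+1)] with N hN
        congr 1
        omega
      have := hcomp.congr' heq
      have h' : Filter.Tendsto (fun N : ℕ => (p ^ i - p ^ (K+1)) * f (N - i))
          Filter.atTop (nhds ((p ^ i - p ^ (K+1)) * 0)) := this.const_mul _
      simpa using h'
    simpa using this
  -- partial sums tend to 1
  have hS1 : Filter.Tendsto (fun N => ∑ i ∈ Finset.range N, f (i+1))
      Filter.atTop (nhds 1) := by
    have h1 : Filter.Tendsto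
        (fun N => 1 - (∑ i ∈ Finset.range (K+1), (p ^ i - p ^ (K+1)) * f (N - i)) / p ^ (K+1))
        Filter.atTop (nhds 1) := by
      have := (hu0.div_const (p ^ (K+1))).const_sub 1
      simpa using this
    apply h1.congr'
    filter_upwards [Filter.eventually_ge_atTop (K+1)] with N hN
    have := key N hN
    field_simp
    linarith
  -- conclude
  have h2 : Filter.Tendsto (fun N => ∑ i ∈ Finset.range N, f (i+1))
      Filter.atTop (nhds (∑' n : ℕ, f (n+1))) :=
    hsummable.hasSum.tendsto_sum_nat
  exact tendsto_nhds_unique h2 hS1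
end
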